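/- Let S be the unilateral shift on ℓ²(ℕ). Then for every orthogonal projection P ∈ B(ℓ²(ℕ)), the operator 3S − P is not invertible. In particular, B(ℓ²(ℕ)) is not a *-clean ring. -/

import Mathlib

open scoped ENNReal

local notation "H" => lp (fun _ : ℕ => ℂ) 2

private lemma proj_norm_le (P : H →L[ℂ] H) (hP : IsIdempotentElem P)
    (hPsa : IsSelfAdjoint P) (x : H) : ‖P x‖ ≤ ‖x‖ := by
  rcases eq_or_lt_of_le (norm_nonneg (P x)) with h0 | h0
  · rw [← h0]; exact norm_nonneg x
  have hsym := hPsa.isSymmetric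
  have hPP : P (P x) = P x := by
    have : P (P x) = (P * P) x := rfl
    rw [this, hP.eq]
  have h1 : (inner ℂ (P x) (P x) : ℂ) = inner ℂ x (P x) := by
    have := hsym x (P x)
    simp only [ContinuousLinearMap.coe_coe] at this
    rw [hPP] at this
    exact this
  have h2 : ‖P x‖ ^ 2 = RCLike.re (inner ℂ (P x) (P x) : ℂ) := by
    rw [inner_self_eq_norm_sq]
  have h3 : RCLike.re (inner ℂ x (P x) : ℂ) ≤ ‖x‖ * ‖P x‖ := re_inner_le_norm x (P x)
  have h4 : ‖P x‖ ^ 2 ≤ ‖x‖ * ‖P x‖ := by rw [h2, h1]; exact h3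
  nlinarith [norm_nonneg x]

private lemma shift_norm_ge (S : H →L[ℂ] H)
    (hS : ∀ (x : H) (n : ℕ), S x (n + 1) = x n) (x : H) : ‖x‖ ≤ ‖S x‖ := by
  have hp : (0:ℝ) < (2 : ℝ≥0∞).toReal := by norm_num
  rw [← Real.rpow_le_rpow_iff (norm_nonneg x) (norm_nonneg (S x)) hp,
    lp.norm_rpow_eq_tsum hp, lp.norm_rpow_eq_tsum hp]
  refine Summable.tsum_le_tsum_of_inj Nat.succ Nat.succ_injective
    (fun c _ => Real.rpow_nonneg (norm_nonneg _) _) (fun n => ?_)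
    ((lp.memℓp x).summable hp) ((lp.memℓp (S x)).summable hp)
  rw [hS x n]

theorem stmt12 (S : lp (fun _ : ℕ => ℂ) 2 →L[ℂ] lp (fun _ : ℕ => ℂ) 2)
    (hS0 : ∀ x : lp (fun _ : ℕ => ℂ) 2, S x 0 = 0)
    (hS : ∀ (x : lp (fun _ : ℕ => ℂ) 2) (n : ℕ), S x (n + 1) = x n) :
    ∀ P : lp (fun _ : ℕ => ℂ) 2 →L[ℂ] lp (fun _ : ℕ => ℂ) 2,
      IsIdempotentElem P → IsSelfAdjoint P → ¬ IsUnit ((3 : ℂ) • S - P) := by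
  intro P hP hPsa hU
  obtain ⟨u, hu⟩ := hU
  set e0 : H := lp.single 2 0 (1 : ℂ) with he0
  set x : H := (↑u⁻¹ : H →L[ℂ] H) e0 with hx
  have h1 : ((3 : ℂ) • S - P) x = e0 := by
    have := congrArg (fun T : H →L[ℂ] H => T e0) u.mul_inv
    simpa [hu, hx, ContinuousLinearMap.mul_apply] using this
  have h1' : (3 : ℂ) • S x - P x = e0 := by
    simpa [ContinuousLinearMap.sub_apply, ContinuousLinearMap.smul_apply] using h1
  -- coordinate 0
  have hc : (P x) 0 = -1 := by
    have h := congrArg (fun y : H => y 0) h1'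
    simp only [he0] at h
    rw [lp.coeFn_sub, Pi.sub_apply, lp.coeFn_smul, Pi.smul_apply,
      lp.single_apply_self, hS0 x] at h
    simp only [smul_zero, zero_sub] at h
    linear_combination -h
  have hp : (0:ℝ) < (2 : ℝ≥0∞).toReal := by norm_num
  have hn1 : (1:ℝ) ≤ ‖P x‖ := by
    have h := lp.norm_apply_le_norm (p := 2) two_ne_zero (P x) 0
    rw [hc] at h
    simpa using h
  have he : ‖e0‖ = 1 := by
    have := lp.norm_single (E := fun _ : ℕ => ℂ) (p := 2) (by norm_num) 0 (1:ℂ)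
    simpa [he0] using this
  have hxle : ‖x‖ ≤ ‖S x‖ := shift_norm_ge S hS x
  have hPle : ‖P x‖ ≤ ‖x‖ := proj_norm_le P hP hPsa x
  have htri : 3 * ‖S x‖ - ‖P x‖ ≤ 1 := by
    calc 3 * ‖S x‖ - ‖P x‖ = ‖(3 : ℂ) • S x‖ - ‖P x‖ := by
          rw [norm_smul]; norm_num
      _ ≤ ‖(3 : ℂ) • S x - P x‖ := norm_sub_norm_le _ _
      _ = 1 := by rw [h1', he]
  linarith
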